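/- Let H be an n-vertex linear hypergraph and let {A, B} be a partition of its edge set such that |A| + |B| − n ≤ |A|/4. If for every pair of distinct intersecting edges e, f ∈ A the pair {e, f} is useful, then H has a proper edge-colouring with n colours in which each colour is assigned to at most two edges. -/

import Mathlib

open Finset
open scoped Classical

/-- A hypergraph on vertex set `Fin n` is *linear* if any two distinct edges intersect in at
most one vertex. -/
def LinearHG {n : ℕ} (H : Finset (Finset (Fin n))) : Prop :=
  ∀ e ∈ H, ∀ f ∈ H, e ≠ f → (e ∩ f).card ≤ 1

/-- `φ` is a proper edge-colouring of the hypergraph `H`. -/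
def IsProperEC {n : ℕ} (H : Finset (Finset (Fin n))) (φ : Finset (Fin n) → ℕ) : Prop :=
  ∀ e ∈ H, ∀ f ∈ H, e ≠ f → (e ∩ f).Nonempty → φ e ≠ φ f

/-- Each colour is assigned to at most two edges of `H` by `φ`. -/
def ColoursUsedAtMostTwice {n : ℕ} (H : Finset (Finset (Fin n)))
    (φ : Finset (Fin n) → ℕ) : Prop :=
  ∀ c : ℕ, (H.filter fun e => φ e = c).card ≤ 2

/-- The set `N(e) ∩ N(f)` of edges of `H` intersecting both `e` and `f` (other than `e`, `f`
themselves). -/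
def CommonNbrs {n : ℕ} (H : Finset (Finset (Fin n))) (e f : Finset (Fin n)) :
    Finset (Finset (Fin n)) :=
  H.filter fun g => g ≠ e ∧ (g ∩ e).Nonempty ∧ g ≠ f ∧ (g ∩ f).Nonempty

/-- A pair of edges `{e, f}` of an `n`-vertex hypergraph is *useful* if `e ≠ f`,
`e ∩ f ≠ ∅`, and `|N(e) ∩ N(f)| ≤ n - 2`. -/
def Useful {n : ℕ} (H : Finset (Finset (Fin n))) (e f : Finset (Fin n)) : Prop :=
  e ≠ f ∧ (e ∩ f).Nonempty ∧ ((CommonNbrs H e f).card : ℤ) ≤ (n : ℤ) - 2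

/-- If `{A, B}` is a partition of the edge set of an `n`-vertex linear hypergraph `H` with
`|A| + |B| - n ≤ |A|/4`, and every pair of distinct intersecting edges of `A` is useful, then
`H` has a proper edge-colouring with `n` colours in which each colour is used at most twice. -/
def IsMatchingOf {n : ℕ} (H : Finset (Finset (Fin n)))
    (M : Finset (Finset (Fin n) × Finset (Fin n))) : Prop :=
  (∀ p ∈ M, p.1 ∈ H ∧ p.2 ∈ H ∧ p.1 ∩ p.2 = ∅ ∧ p.1 ≠ p.2) ∧
  ∀ p ∈ M, ∀ q ∈ M, p ≠ q → p.1 ≠ q.1 ∧ p.1 ≠ q.2 ∧ p.2 ≠ q.1 ∧ p.2 ≠ q.2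

def mSet {n : ℕ} (M : Finset (Finset (Fin n) × Finset (Fin n))) : Finset (Finset (Fin n)) :=
  M.image Prod.fst ∪ M.image Prod.snd

def lidx {α : Type*} [DecidableEq α] (l : List α) (a : α) : ℕ := l.idxOf a

lemma lidx_lt {α : Type*} [DecidableEq α] {l : List α} {a : α} (h : a ∈ l) :
    lidx l a < l.length := List.idxOf_lt_length_iff.2 h

lemma lidx_inj {α : Type*} [DecidableEq α] {l : List α} {a b : α} (ha : a ∈ l) (hb : b ∈ l)
    (h : lidx l a = lidx l b) : a = b := (List.idxOf_inj ha).1 h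

lemma mem_mSet {n : ℕ} {M : Finset (Finset (Fin n) × Finset (Fin n))} {a : Finset (Fin n)} :
    a ∈ mSet M ↔ ∃ p ∈ M, a = p.1 ∨ a = p.2 := by
  simp only [mSet, mem_union, mem_image]
  constructor
  · rintro (⟨p, hp, rfl⟩ | ⟨p, hp, rfl⟩)
    · exact ⟨p, hp, Or.inl rfl⟩
    · exact ⟨p, hp, Or.inr rfl⟩
  · rintro ⟨p, hp, rfl | rfl⟩
    · exact Or.inl ⟨p, hp, rfl⟩
    · exact Or.inr ⟨p, hp, rfl⟩

lemma matching_uniq {n : ℕ} {H : Finset (Finset (Fin n))}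
    {M : Finset (Finset (Fin n) × Finset (Fin n))} (hM : IsMatchingOf H M)
    {p q : Finset (Fin n) × Finset (Fin n)} (hp : p ∈ M) (hq : q ∈ M)
    {e : Finset (Fin n)} (he : e = p.1 ∨ e = p.2) (he' : e = q.1 ∨ e = q.2) : p = q := by
  by_contra hne
  obtain ⟨h1, h2, h3, h4⟩ := hM.2 p hp q hq hne
  rcases he with rfl | rfl <;> rcases he' with h | h <;> simp_all

lemma mSet_subset {n : ℕ} {H : Finset (Finset (Fin n))}
    {M : Finset (Finset (Fin n) × Finset (Fin n))} (hM : IsMatchingOf H M) :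
    mSet M ⊆ H := by
  intro a ha
  obtain ⟨p, hp, rfl | rfl⟩ := mem_mSet.1 ha
  · exact (hM.1 p hp).1
  · exact (hM.1 p hp).2.1

lemma card_mSet {n : ℕ} {H : Finset (Finset (Fin n))}
    {M : Finset (Finset (Fin n) × Finset (Fin n))} (hM : IsMatchingOf H M) :
    (mSet M).card = 2 * M.card := by
  have hfst : (M.image Prod.fst).card = M.card := by
    apply card_image_of_injOn
    intro p hp q hq h
    by_contra hne
    exact (hM.2 p hp q hq hne).1 h
  have hsnd : (M.image Prod.snd).card = M.card := by
    apply card_image_of_injOn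
    intro p hp q hq h
    by_contra hne
    exact absurd h (by simpa using (hM.2 p hp q hq hne).2.2.2)
  have hdisj : Disjoint (M.image Prod.fst) (M.image Prod.snd) := by
    rw [disjoint_left]
    rintro a ha hb
    obtain ⟨p, hp, rfl⟩ := mem_image.1 ha
    obtain ⟨q, hq, hqa⟩ := mem_image.1 hb
    by_cases hne : p = q
    · subst hne; exact (hM.1 p hp).2.2.2 hqa.symm
    · exact (hM.2 p hp q hq hne).2.1 hqa.symm
  rw [mSet, card_union_of_disjoint hdisj, hfst, hsnd]; ring

lemma colouring_of_matching {n : ℕ} (H : Finset (Finset (Fin n)))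
    (M : Finset (Finset (Fin n) × Finset (Fin n)))
    (hM : IsMatchingOf H M) (hcard : H.card ≤ n + M.card) :
    ∃ φ : Finset (Fin n) → ℕ,
      (∀ e ∈ H, φ e < n) ∧ IsProperEC H φ ∧ ColoursUsedAtMostTwice H φ := by
  set S := mSet M with hS
  set R := H \ S with hR
  have hSsub : S ⊆ H := mSet_subset hM
  have hScard : S.card = 2 * M.card := card_mSet hM
  have hRcard : R.card = H.card - 2 * M.card := by rw [hR, card_sdiff_of_subset hSsub, hScard]
  have h2M : 2 * M.card ≤ H.card := by rw [← hScard]; exact card_le_card hSsub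
  set φ : Finset (Fin n) → ℕ := fun e =>
    if h : ∃ p ∈ M, e = p.1 ∨ e = p.2 then lidx M.toList h.choose
    else M.card + lidx R.toList e with hφ
  -- value on matched edges
  have phi_matched : ∀ p ∈ M, ∀ e : Finset (Fin n), (e = p.1 ∨ e = p.2) →
      φ e = lidx M.toList p := by
    intro p hp e he
    have h : ∃ q ∈ M, e = q.1 ∨ e = q.2 := ⟨p, hp, he⟩
    have : h.choose = p := matching_uniq hM h.choose_spec.1 hp h.choose_spec.2 he
    simp only [hφ, dif_pos h, this]
  have phi_unmatched : ∀ e ∈ R, φ e = M.card + lidx R.toList e := by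
    intro e he
    have h : ¬ ∃ p ∈ M, e = p.1 ∨ e = p.2 := by
      rw [hR, mem_sdiff] at he
      exact fun hc => he.2 (mem_mSet.2 hc)
    simp only [hφ, dif_neg h]
  have idxM_lt : ∀ p ∈ M, lidx M.toList p < M.card := by
    intro p hp
    rw [← Finset.length_toList]
    exact lidx_lt (Finset.mem_toList.2 hp)
  have idxR_lt : ∀ e ∈ R, lidx R.toList e < R.card := by
    intro e he
    rw [← Finset.length_toList]
    exact lidx_lt (Finset.mem_toList.2 he)
  have hMn : M.card ≤ n := by omega
  have cases_e : ∀ e ∈ H, e ∈ R ∨ ∃ p ∈ M, e = p.1 ∨ e = p.2 := by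
    intro e he
    by_cases h : e ∈ S
    · exact Or.inr (mem_mSet.1 h)
    · exact Or.inl (mem_sdiff.2 ⟨he, h⟩)
  refine ⟨φ, ?_, ?_, ?_⟩
  · intro e he
    rcases cases_e e he with h | ⟨p, hp, hep⟩
    · have := idxR_lt e h
      rw [phi_unmatched e h]
      omega
    · have := idxM_lt p hp
      rw [phi_matched p hp e hep]
      omega
  · intro e he f hf hef hint
    rcases cases_e e he with h1 | ⟨p, hp, hep⟩ <;> rcases cases_e f hf with h2 | ⟨q, hq, hfq⟩
    · rw [phi_unmatched e h1, phi_unmatched f h2]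
      intro h
      have : lidx R.toList e = lidx R.toList f := by omega
      exact hef (lidx_inj (Finset.mem_toList.2 h1) (Finset.mem_toList.2 h2) this)
    · rw [phi_unmatched e h1, phi_matched q hq f hfq]
      have := idxM_lt q hq
      omega
    · rw [phi_matched p hp e hep, phi_unmatched f h2]
      have := idxM_lt p hp
      omega
    · rw [phi_matched p hp e hep, phi_matched q hq f hfq]
      intro h
      have hpq : p = q :=
        lidx_inj (Finset.mem_toList.2 hp) (Finset.mem_toList.2 hq) h
      subst hpq
      have hdisjpq := (hM.1 p hp).2.2.1
      rcases hep with rfl | rfl <;> rcases hfq with rfl | rfl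
      · exact hef rfl
      · rw [hdisjpq] at hint; exact not_nonempty_empty hint
      · rw [inter_comm, hdisjpq] at hint; exact not_nonempty_empty hint
      · exact hef rfl
  · intro c
    by_contra hc
    push_neg at hc
    obtain ⟨a, ha, b, hb, d, hd, hab, had, hbd⟩ := Finset.two_lt_card.1 hc
    simp only [mem_filter] at ha hb hd
    -- all three must be matched
    have key : ∀ x, x ∈ H → φ x = c → ∀ y, y ∈ H → φ y = c → x ≠ y →
        ∃ p ∈ M, x = p.1 ∨ x = p.2 := by
      intro x hx hxc y hy hyc hxy
      rcases cases_e x hx with h1 | h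
      · exfalso
        rcases cases_e y hy with h2 | ⟨q, hq, hyq⟩
        · rw [phi_unmatched x h1] at hxc
          rw [phi_unmatched y h2] at hyc
          have : lidx R.toList x = lidx R.toList y := by omega
          exact hxy (lidx_inj (Finset.mem_toList.2 h1) (Finset.mem_toList.2 h2) this)
        · rw [phi_unmatched x h1] at hxc
          rw [phi_matched q hq y hyq] at hyc
          have := idxM_lt q hq
          omega
      · exact h
    obtain ⟨p, hp, hap⟩ := key a ha.1 ha.2 b hb.1 hb.2 hab
    obtain ⟨q, hq, hbq⟩ := key b hb.1 hb.2 a ha.1 ha.2 hab.symm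
    obtain ⟨r, hr, hdr⟩ := key d hd.1 hd.2 a ha.1 ha.2 had.symm
    have hac : φ a = lidx M.toList p := phi_matched p hp a hap
    have hbc : φ b = lidx M.toList q := phi_matched q hq b hbq
    have hdc : φ d = lidx M.toList r := phi_matched r hr d hdr
    have hpq : p = q := lidx_inj (Finset.mem_toList.2 hp) (Finset.mem_toList.2 hq)
      (by rw [← hac, ← hbc, ha.2, hb.2])
    have hpr : p = r := lidx_inj (Finset.mem_toList.2 hp) (Finset.mem_toList.2 hr)
      (by rw [← hac, ← hdc, ha.2, hd.2])
    subst hpq; subst hpr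
    rcases hap with h1 | h1 <;> rcases hbq with h2 | h2 <;> rcases hdr with h3 | h3 <;>
      first
      | exact hab (h1.trans h2.symm)
      | exact had (h1.trans h3.symm)
      | exact hbd (h2.trans h3.symm)


lemma comp_mem_mSet {n : ℕ} {M : Finset (Finset (Fin n) × Finset (Fin n))}
    {p : Finset (Fin n) × Finset (Fin n)} (hp : p ∈ M) :
    p.1 ∈ mSet M ∧ p.2 ∈ mSet M :=
  ⟨mem_mSet.2 ⟨p, hp, Or.inl rfl⟩, mem_mSet.2 ⟨p, hp, Or.inr rfl⟩⟩

lemma notin_mSet {n : ℕ} {M : Finset (Finset (Fin n) × Finset (Fin n))}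
    {e : Finset (Fin n)} (he : e ∉ mSet M) :
    ∀ p ∈ M, e ≠ p.1 ∧ e ≠ p.2 := by
  intro p hp
  constructor
  · exact fun h => he (mem_mSet.2 ⟨p, hp, Or.inl h⟩)
  · exact fun h => he (mem_mSet.2 ⟨p, hp, Or.inr h⟩)

lemma augment1 {n : ℕ} {H : Finset (Finset (Fin n))}
    {M : Finset (Finset (Fin n) × Finset (Fin n))} (hM : IsMatchingOf H M)
    {e f : Finset (Fin n)} (he : e ∈ H) (hf : f ∈ H) (heS : e ∉ mSet M) (hfS : f ∉ mSet M)
    (hef : e ≠ f) (hd : e ∩ f = ∅) :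
    IsMatchingOf H (insert (e, f) M) ∧ (insert (e, f) M).card = M.card + 1 := by
  have heC := notin_mSet heS
  have hfC := notin_mSet hfS
  have hnotmem : (e, f) ∉ M := fun h => (heC _ h).1 rfl
  refine ⟨⟨?_, ?_⟩, card_insert_of_notMem hnotmem⟩
  · intro p hp
    rcases mem_insert.1 hp with rfl | hp
    · exact ⟨he, hf, hd, hef⟩
    · exact hM.1 p hp
  · intro p hp q hq hne
    rcases mem_insert.1 hp with rfl | hp <;> rcases mem_insert.1 hq with rfl | hq
    · exact absurd rfl hne
    · exact ⟨(heC q hq).1, (heC q hq).2, (hfC q hq).1, (hfC q hq).2⟩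
    · exact ⟨((heC p hp).1).symm, ((hfC p hp).1).symm, ((heC p hp).2).symm,
        ((hfC p hp).2).symm⟩
    · exact hM.2 p hp q hq hne

lemma augment2 {n : ℕ} {H : Finset (Finset (Fin n))}
    {M : Finset (Finset (Fin n) × Finset (Fin n))} (hM : IsMatchingOf H M)
    {p : Finset (Fin n) × Finset (Fin n)} (hp : p ∈ M)
    {e f : Finset (Fin n)} (he : e ∈ H) (hf : f ∈ H) (heS : e ∉ mSet M) (hfS : f ∉ mSet M)
    (hef : e ≠ f) (h1 : p.1 ∩ e = ∅) (h2 : p.2 ∩ f = ∅) :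
    ∃ M' : Finset (Finset (Fin n) × Finset (Fin n)),
      IsMatchingOf H M' ∧ M'.card = M.card + 1 := by
  obtain ⟨hp1H, hp2H, hpd, hpne⟩ := hM.1 p hp
  have heC := notin_mSet heS
  have hfC := notin_mSet hfS
  have hp1e : p.1 ≠ e := ((heC p hp).1).symm
  have hp1f : p.1 ≠ f := ((hfC p hp).1).symm
  have hp2e : p.2 ≠ e := ((heC p hp).2).symm
  have hp2f : p.2 ≠ f := ((hfC p hp).2).symm
  refine ⟨insert (p.1, e) (insert (p.2, f) (M.erase p)), ⟨?_, ?_⟩, ?_⟩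
  · intro r hr
    rcases mem_insert.1 hr with rfl | hr
    · exact ⟨hp1H, he, h1, hp1e⟩
    rcases mem_insert.1 hr with rfl | hr
    · exact ⟨hp2H, hf, h2, hp2f⟩
    · exact hM.1 r (mem_of_mem_erase hr)
  · -- pairwise distinct components
    have main : ∀ r ∈ M.erase p,
        p.1 ≠ r.1 ∧ p.1 ≠ r.2 ∧ e ≠ r.1 ∧ e ≠ r.2 := by
      intro r hr
      have hrM := mem_of_mem_erase hr
      have hrp : p ≠ r := (ne_of_mem_erase hr).symm
      obtain ⟨a1, a2, _, _⟩ := hM.2 p hp r hrM (fun h => hrp h)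
      exact ⟨a1, a2, (heC r hrM).1, (heC r hrM).2⟩
    have main2 : ∀ r ∈ M.erase p,
        p.2 ≠ r.1 ∧ p.2 ≠ r.2 ∧ f ≠ r.1 ∧ f ≠ r.2 := by
      intro r hr
      have hrM := mem_of_mem_erase hr
      have hrp : p ≠ r := (ne_of_mem_erase hr).symm
      obtain ⟨_, _, a3, a4⟩ := hM.2 p hp r hrM (fun h => hrp h)
      exact ⟨a3, a4, (hfC r hrM).1, (hfC r hrM).2⟩
    intro r hr s hs hrs
    rcases mem_insert.1 hr with rfl | hr'
    · rcases mem_insert.1 hs with rfl | hs'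
      · exact absurd rfl hrs
      rcases mem_insert.1 hs' with rfl | hs''
      · exact ⟨hpne, hp1f, hp2e.symm, hef⟩
      · obtain ⟨a1, a2, a3, a4⟩ := main s hs''
        exact ⟨a1, a2, a3, a4⟩
    rcases mem_insert.1 hr' with rfl | hr''
    · rcases mem_insert.1 hs with rfl | hs'
      · exact ⟨hpne.symm, hp2e, hp1f.symm, hef.symm⟩
      rcases mem_insert.1 hs' with rfl | hs''
      · exact absurd rfl hrs
      · obtain ⟨a1, a2, a3, a4⟩ := main2 s hs''
        exact ⟨a1, a2, a3, a4⟩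
    · rcases mem_insert.1 hs with rfl | hs'
      · obtain ⟨a1, a2, a3, a4⟩ := main r hr''
        exact ⟨a1.symm, a3.symm, a2.symm, a4.symm⟩
      rcases mem_insert.1 hs' with rfl | hs''
      · obtain ⟨a1, a2, a3, a4⟩ := main2 r hr''
        exact ⟨a1.symm, a3.symm, a2.symm, a4.symm⟩
      · exact hM.2 r (mem_of_mem_erase hr'') s (mem_of_mem_erase hs'')
          hrs
  · -- cardinality
    have h1' : (p.2, f) ∉ M.erase p := by
      intro h
      exact (hfC _ (mem_of_mem_erase h)).2 rfl
    have h2' : (p.1, e) ∉ insert (p.2, f) (M.erase p) := by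
      intro h
      rcases mem_insert.1 h with h | h
      · exact hpne (congrArg Prod.fst h)
      · exact (heC _ (mem_of_mem_erase h)).2 rfl
    have hMpos : 1 ≤ M.card := card_pos.2 ⟨p, hp⟩
    rw [card_insert_of_notMem h2', card_insert_of_notMem h1', card_erase_of_mem hp]
    omega

lemma exists_matching_card (n : ℕ) (H A B : Finset (Finset (Fin n)))
    (hunion : A ∪ B = H) (hdisj : Disjoint A B)
    (hsize : (A.card : ℝ) + (B.card : ℝ) - (n : ℝ) ≤ (A.card : ℝ) / 4)
    (huse : ∀ e ∈ A, ∀ f ∈ A, e ≠ f → (e ∩ f).Nonempty → Useful H e f) :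
    ∃ M : Finset (Finset (Fin n) × Finset (Fin n)),
      IsMatchingOf H M ∧ H.card ≤ n + M.card := by
  have hAH : A ⊆ H := by rw [← hunion]; exact subset_union_left
  have hcardAB : A.card + B.card = H.card := by
    rw [← card_union_of_disjoint hdisj, hunion]
  have hA4 : 4 * (H.card - n) ≤ A.card := by
    have hr : 4 * (H.card : ℝ) ≤ 4 * (n : ℝ) + (A.card : ℝ) := by
      have : (A.card : ℝ) + (B.card : ℝ) = (H.card : ℝ) := by exact_mod_cast hcardAB
      linarith
    have : 4 * H.card ≤ 4 * n + A.card := by exact_mod_cast hr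
    omega
  -- maximum matching
  have hempty : (∅ : Finset (Finset (Fin n) × Finset (Fin n))) ∈
      ((H ×ˢ H).powerset.filter (fun M => IsMatchingOf H M)) := by
    refine mem_filter.2 ⟨empty_mem_powerset _, ?_, ?_⟩ <;> simp
  obtain ⟨M0, hM0mem, hmax⟩ := Finset.exists_max_image
    ((H ×ˢ H).powerset.filter (fun M => IsMatchingOf H M)) Finset.card ⟨∅, hempty⟩
  have hM0 : IsMatchingOf H M0 := (mem_filter.1 hM0mem).2
  have hmaxall : ∀ M', IsMatchingOf H M' → M'.card ≤ M0.card := by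
    intro M' hM'
    apply hmax
    refine mem_filter.2 ⟨mem_powerset.2 ?_, hM'⟩
    intro p hp
    exact mem_product.2 ⟨(hM'.1 p hp).1, (hM'.1 p hp).2.1⟩
  refine ⟨M0, hM0, ?_⟩
  by_contra hcon
  push_neg at hcon
  set t := M0.card with htdef
  have ht : t + 1 ≤ H.card - n := by omega
  set S := mSet M0 with hSdef
  set U := H \ S with hUdef
  have hScard : S.card = 2 * t := card_mSet hM0
  have hUint : ∀ e ∈ U, ∀ f ∈ U, e ≠ f → (e ∩ f).Nonempty := by
    intro e he f hf hef
    by_contra hc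
    rw [not_nonempty_iff_eq_empty] at hc
    obtain ⟨he1, he2⟩ := mem_sdiff.1 he
    obtain ⟨hf1, hf2⟩ := mem_sdiff.1 hf
    obtain ⟨hM1, hc1⟩ := augment1 hM0 he1 hf1 he2 hf2 hef hc
    have := hmaxall _ hM1
    omega
  have haug2 : ∀ p ∈ M0, ∀ e ∈ U, ∀ f ∈ U, e ≠ f →
      p.1 ∩ e = ∅ → p.2 ∩ f = ∅ → False := by
    intro p hp e he f hf hef h1 h2
    obtain ⟨he1, he2⟩ := mem_sdiff.1 he
    obtain ⟨hf1, hf2⟩ := mem_sdiff.1 hf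
    obtain ⟨M', hM', hc'⟩ := augment2 hM0 hp he1 hf1 he2 hf2 hef h1 h2
    have := hmaxall _ hM'
    omega
  have hUA : A \ S ⊆ U := sdiff_subset_sdiff hAH (le_refl S)
  have hUAcard : A.card - 2 * t ≤ (A \ S).card := by
    have := le_card_sdiff S A
    omega
  -- key step
  have key : ∀ e ∈ A \ S, ∀ f ∈ A \ S, e ≠ f →
      ∃ p ∈ M0, (p.1 ∩ e = ∅ ∧ p.2 ∩ e = ∅) ∨ (p.1 ∩ f = ∅ ∧ p.2 ∩ f = ∅) := by
    intro e he f hf hef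
    have heU := hUA he
    have hfU := hUA hf
    have heA : e ∈ A := (mem_sdiff.1 he).1
    have hfA : f ∈ A := (mem_sdiff.1 hf).1
    have hint : (e ∩ f).Nonempty := hUint e heU f hfU hef
    have hu := huse e heA f hfA hef hint
    set X := CommonNbrs H e f ∪ {e, f} with hXdef
    have hXcard : X.card ≤ n := by
      have h2 : ((CommonNbrs H e f).card : ℤ) + 2 ≤ (n : ℤ) := by
        have := hu.2.2
        linarith
      have h2' : (CommonNbrs H e f).card + 2 ≤ n := by exact_mod_cast h2
      have hp2 : ({e, f} : Finset (Finset (Fin n))).card ≤ 2 := by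
        apply le_trans (card_insert_le _ _)
        simp
      have hcu := card_union_le (CommonNbrs H e f) ({e, f} : Finset (Finset (Fin n)))
      rw [← hXdef] at hcu
      omega
    set D := H \ X with hDdef
    have hDcard : t + 1 ≤ D.card := by
      have h1 := le_card_sdiff X H
      rw [← hDdef] at h1
      have h2 : H.card - n ≤ H.card - X.card := Nat.sub_le_sub_left hXcard _
      omega
    have hDalt : ∀ g ∈ D, g ≠ e ∧ g ≠ f ∧ (g ∩ e = ∅ ∨ g ∩ f = ∅) := by
      intro g hg
      obtain ⟨hgH, hgX⟩ := mem_sdiff.1 hg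
      have hge : g ≠ e := fun h => hgX (mem_union_right _ (by simp [h]))
      have hgf : g ≠ f := fun h => hgX (mem_union_right _ (by simp [h]))
      have hgC : g ∉ CommonNbrs H e f := fun h => hgX (mem_union_left _ h)
      rw [CommonNbrs, mem_filter] at hgC
      push_neg at hgC
      refine ⟨hge, hgf, ?_⟩
      by_cases hh : (g ∩ e).Nonempty
      · right
        rw [← not_nonempty_iff_eq_empty]
        exact not_nonempty_iff_eq_empty.2 (hgC hgH hge hh hgf)
      · left
        rw [← not_nonempty_iff_eq_empty]
        exact hh
    have hDS : D ⊆ S := by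
      intro g hg
      by_contra hgS
      have hgU : g ∈ U := mem_sdiff.2 ⟨(mem_sdiff.1 hg).1, hgS⟩
      obtain ⟨hge, hgf, hcase⟩ := hDalt g hg
      rcases hcase with h | h
      · rw [← not_nonempty_iff_eq_empty] at h
        exact h (hUint g hgU e heU hge)
      · rw [← not_nonempty_iff_eq_empty] at h
        exact h (hUint g hgU f hfU hgf)
    by_contra hno
    push_neg at hno
    have hnd : ∀ p ∈ M0, p.1 ∉ D ∨ p.2 ∉ D := by
      intro p hp
      by_contra hcon2
      push_neg at hcon2
      obtain ⟨hd1, hd2⟩ := hcon2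
      obtain ⟨_, _, c1⟩ := hDalt _ hd1
      obtain ⟨_, _, c2⟩ := hDalt _ hd2
      have hnop := hno p hp
      rcases c1 with c1 | c1 <;> rcases c2 with c2 | c2
      · exact (hnop.1 c1).ne_empty c2
      · exact haug2 p hp e heU f hfU hef c1 c2
      · exact haug2 p hp f hfU e heU hef.symm c1 c2
      · exact (hnop.2 c1).ne_empty c2
    have hDim : D ⊆ M0.image (fun p => if p.1 ∈ D then p.1 else p.2) := by
      intro g hg
      have hgS : g ∈ S := hDS hg
      obtain ⟨p, hp, hgp⟩ := mem_mSet.1 hgS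
      apply mem_image.2
      refine ⟨p, hp, ?_⟩
      rcases hgp with rfl | rfl
      · rw [if_pos hg]
      · rcases hnd p hp with h | h
        · rw [if_neg h]
        · exact absurd hg h
    have : D.card ≤ t := le_trans (card_le_card hDim) card_image_le
    omega
  -- the counting
  set W := (A \ S).filter (fun e => ∃ p ∈ M0, p.1 ∩ e = ∅ ∧ p.2 ∩ e = ∅) with hWdef
  have hW1 : (A \ S).card ≤ W.card + 1 := by
    by_cases hsub : A \ S ⊆ W
    · have := card_le_card hsub
      omega
    · obtain ⟨a, haUA, haW⟩ := not_subset.1 hsub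
      have hins : A \ S ⊆ insert a W := by
        intro x hx
        by_cases hxa : x = a
        · subst hxa; exact mem_insert_self _ _
        · apply mem_insert_of_mem
          apply mem_filter.2
          refine ⟨hx, ?_⟩
          rcases key x hx a haUA hxa with ⟨p, hp, hcase | hcase⟩
          · exact ⟨p, hp, hcase⟩
          · exact absurd (mem_filter.2 ⟨haUA, ⟨p, hp, hcase⟩⟩) haW
      exact le_trans (card_le_card hins) (card_insert_le _ _)
  have hW2 : W.card ≤ t := by
    have hch : ∀ w ∈ W, ∃ p ∈ M0, p.1 ∩ w = ∅ ∧ p.2 ∩ w = ∅ :=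
      fun w hw => (mem_filter.1 hw).2
    have hch' : ∀ w, w ∈ W → ∃ p, p ∈ M0 ∧ p.1 ∩ w = ∅ ∧ p.2 ∩ w = ∅ := by
      intro w hw
      obtain ⟨p, hp, h⟩ := hch w hw
      exact ⟨p, hp, h⟩
    choose g hg1 hg2 hg3 using hch'
    have hle : W.card ≤ M0.card := by
      apply card_le_card_of_injOn (fun w => if h : w ∈ W then g w h else ((∅, ∅) :
        Finset (Fin n) × Finset (Fin n)))
      · intro w hw
        have hw' : w ∈ W := by simpa using hw
        simp only [dif_pos hw']
        exact hg1 w hw'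
      · intro x hx y hy hxy
        rw [Finset.mem_coe] at hx hy
        simp only [dif_pos hx, dif_pos hy] at hxy
        by_contra hne
        have h2y : (g x hx).2 ∩ y = ∅ := by rw [hxy]; exact hg3 y hy
        exact haug2 (g x hx) (hg1 x hx) x (hUA (mem_filter.1 hx).1)
          y (hUA (mem_filter.1 hy).1) hne (hg2 x hx) h2y
    omega
  omega

theorem colouring_from_useful_part
    (n : ℕ) (H A B : Finset (Finset (Fin n)))
    (hne : ∀ e ∈ H, e.Nonempty) (hlin : LinearHG H)
    (hunion : A ∪ B = H) (hdisj : Disjoint A B)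
    (hsize : (A.card : ℝ) + (B.card : ℝ) - (n : ℝ) ≤ (A.card : ℝ) / 4)
    (huse : ∀ e ∈ A, ∀ f ∈ A, e ≠ f → (e ∩ f).Nonempty → Useful H e f) :
    ∃ φ : Finset (Fin n) → ℕ,
      (∀ e ∈ H, φ e < n) ∧ IsProperEC H φ ∧ ColoursUsedAtMostTwice H φ := by
  obtain ⟨M, hM, hcard⟩ := exists_matching_card n H A B hunion hdisj hsize huse
  exact colouring_of_matching H M hM hcard
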